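/- arXiv:2501.16683 — 2 statements merged into one kernel-verified Lean document; each statement's English description precedes it below -/
import Mathlib

section
/- (Controllability Gramian of the continuous-time I-PORK ROM.) Let Q_s be an invertible Hermitian solution of -S_b* Q_s - Q_s S_b + L_b* L_b = 0, and set A_r = -Q_s^{-1} S_b* Q_s, B_r = Q_s^{-1} L_b*. Then P_r = Q_s^{-1} satisfies the Lyapunov equation A_r P_r + P_r A_r* + B_r B_r* = 0. -/
open Matrix
open scoped Matrix

theorem ipork_controllability_gramian
    {m r : ℕ}
    (S_b : Matrix (Fin r) (Fin r) ℂ) (L_b : Matrix (Fin m) (Fin r) ℂ)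
    (Q_s : Matrix (Fin r) (Fin r) ℂ)
    (hHerm : Q_s.IsHermitian) (hUnit : IsUnit Q_s)
    (hLyap : -(S_bᴴ * Q_s) - Q_s * S_b + L_bᴴ * L_b = 0)
    (A_r : Matrix (Fin r) (Fin r) ℂ) (hA : A_r = -(Q_s⁻¹ * S_bᴴ * Q_s))
    (B_r : Matrix (Fin r) (Fin m) ℂ) (hB : B_r = Q_s⁻¹ * L_bᴴ) :
    A_r * Q_s⁻¹ + Q_s⁻¹ * A_rᴴ + B_r * B_rᴴ = 0 := by
  subst hA hB
  have hdet : IsUnit Q_s.det := (Matrix.isUnit_iff_isUnit_det _).mp hUnit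
  have h1 : Q_s⁻¹ * Q_s = 1 := Matrix.nonsing_inv_mul _ hdet
  have h2 : Q_s * Q_s⁻¹ = 1 := Matrix.mul_nonsing_inv _ hdet
  have hH : Q_s⁻¹ᴴ = Q_s⁻¹ := by
    rw [Matrix.conjTranspose_nonsing_inv, hHerm.eq]
  have key : -(Q_s⁻¹ * S_bᴴ * Q_s) * Q_s⁻¹ + Q_s⁻¹ * (-(Q_s⁻¹ * S_bᴴ * Q_s))ᴴ
      + Q_s⁻¹ * L_bᴴ * (Q_s⁻¹ * L_bᴴ)ᴴ
      = Q_s⁻¹ * (-(S_bᴴ * Q_s) - Q_s * S_b + L_bᴴ * L_b) * Q_s⁻¹ := by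
    simp only [conjTranspose_neg, conjTranspose_mul, conjTranspose_conjTranspose,
      hH, hHerm.eq]
    simp only [Matrix.mul_add, Matrix.add_mul, Matrix.mul_sub, Matrix.sub_mul,
      Matrix.mul_neg, Matrix.neg_mul, Matrix.mul_assoc]
    rw [h2]
    simp [Matrix.mul_assoc, h1]
    abel
  rw [key, hLyap]
  simp
end

section
/- (Theorem 1(2), discrete-time I-PORK Gramian.) Let Q̄_s be an invertible Hermitian solution of S̄_b* Q̄_s S̄_b - Q̄_s + L̄_b* L̄_b = 0, and set A_r = Q̄_s^{-1} S̄_b* Q̄_s and B_r = Q̄_s^{-1} L̄_b*. Then P_r = Q̄_s^{-1} satisfies the discrete-time Lyapunov equation A_r P_r A_r* - P_r + B_r B_r* = 0. -/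
open Matrix
open scoped Matrix

theorem dt_ipork_gramian
    {m r : ℕ}
    (Sb : Matrix (Fin r) (Fin r) ℂ) (Lb : Matrix (Fin m) (Fin r) ℂ)
    (Qs : Matrix (Fin r) (Fin r) ℂ)
    (hHerm : Qs.IsHermitian) (hUnit : IsUnit Qs)
    (hStein : Sbᴴ * Qs * Sb - Qs + Lbᴴ * Lb = 0)
    (A_r : Matrix (Fin r) (Fin r) ℂ) (hA : A_r = Qs⁻¹ * Sbᴴ * Qs)
    (B_r : Matrix (Fin r) (Fin m) ℂ) (hB : B_r = Qs⁻¹ * Lbᴴ) :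
    A_r * Qs⁻¹ * A_rᴴ - Qs⁻¹ + B_r * B_rᴴ = 0 := by
  have hdet : IsUnit Qs.det := (Matrix.isUnit_iff_isUnit_det Qs).mp hUnit
  have hQQ : Qs * Qs⁻¹ = 1 := mul_nonsing_inv Qs hdet
  have hinvH : Qs⁻¹ᴴ = Qs⁻¹ := by
    rw [Matrix.conjTranspose_nonsing_inv, hHerm.eq]
  have key : A_r * Qs⁻¹ * A_rᴴ - Qs⁻¹ + B_r * B_rᴴ
      = Qs⁻¹ * (Sbᴴ * Qs * Sb - Qs + Lbᴴ * Lb) * Qs⁻¹ := by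
    rw [hA, hB]
    simp only [Matrix.conjTranspose_mul, hinvH, hHerm.eq, Matrix.conjTranspose_conjTranspose]
    have h1 : Qs⁻¹ * Sbᴴ * Qs * Qs⁻¹ * (Qs * (Sb * Qs⁻¹))
        = Qs⁻¹ * (Sbᴴ * Qs * Sb) * Qs⁻¹ := by
      rw [Matrix.mul_assoc (Qs⁻¹ * Sbᴴ * Qs) Qs⁻¹ _, ← Matrix.mul_assoc Qs⁻¹ Qs _,
        nonsing_inv_mul Qs hdet, Matrix.one_mul]
      noncomm_ring
    have h2 : Qs⁻¹ = Qs⁻¹ * Qs * Qs⁻¹ := by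
      rw [nonsing_inv_mul Qs hdet, Matrix.one_mul]
    calc Qs⁻¹ * Sbᴴ * Qs * Qs⁻¹ * (Qs * (Sb * Qs⁻¹)) - Qs⁻¹ + Qs⁻¹ * Lbᴴ * (Lb * Qs⁻¹)
        = Qs⁻¹ * (Sbᴴ * Qs * Sb) * Qs⁻¹ - Qs⁻¹ * Qs * Qs⁻¹ + Qs⁻¹ * (Lbᴴ * Lb) * Qs⁻¹ := by
          rw [h1, ← h2]; simp only [Matrix.mul_assoc]
      _ = Qs⁻¹ * (Sbᴴ * Qs * Sb - Qs + Lbᴴ * Lb) * Qs⁻¹ := by noncomm_ring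
  rw [key, hStein, Matrix.mul_zero, Matrix.zero_mul]
end
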